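/- Let (μ_t)_{t≥0} be a continuous monotone convolution semigroup of probability measures on the unit circle S¹ whose K-transforms (K_t)_{t≥0} satisfy d/dt K_t(z) = −K_t(z)·u(K_t(z)) for a holomorphic generator u : 𝔻 → ℂ with Re u ≥ 0. Then for every t ≥ 0 the derivative of K_t at 0 equals e^{−t·u(0)}, and this is the first moment of μ_t: ∫_{S¹} x dμ_t(x) = e^{−t·u(0)}. -/

import Mathlib

open MeasureTheory Metric

noncomputable instance : MeasurableSpace Circle := borel Circle
instance : BorelSpace Circle := ⟨rfl⟩

/-- `ψ_μ(z) = ∫_{S¹} zx/(1-zx) dμ(x)` for a measure `μ` on the unit circle. -/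
noncomputable def psiM (μ : Measure Circle) (z : ℂ) : ℂ :=
  ∫ x : Circle, (z * x) / (1 - z * x) ∂μ

/-- The K-transform `K_μ(z) = ψ_μ(z)/(1 + ψ_μ(z))` of a measure on the unit circle. -/
noncomputable def Km (μ : Measure Circle) (z : ℂ) : ℂ :=
  psiM μ z / (1 + psiM μ z)

open Set
open Complex
open scoped NNReal

lemma circle_coe_cont : Continuous (fun x : Circle => (x : ℂ)) := continuous_subtype_val

lemma integ_cont (μ : Measure Circle) [IsProbabilityMeasure μ] (g : Circle → ℂ)
    (hg : Continuous g) : Integrable g μ := by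
  exact hg.integrable_of_hasCompactSupport (HasCompactSupport.of_compactSpace g)

lemma one_sub_ne {z : ℂ} (hz : ‖z‖ < 1) (x : Circle) : 1 - z * x ≠ 0 := by
  intro h
  have h1 : z * x = 1 := by linear_combination -h
  have : ‖z * x‖ = ‖z‖ := by
    rw [norm_mul, Circle.norm_coe, mul_one]
  rw [h1] at this
  simp at this
  linarith

lemma integrand_hasDerivAt {z : ℂ} (hz : ‖z‖ < 1) (x : Circle) :
    HasDerivAt (fun w : ℂ => w * x / (1 - w * x)) ((x : ℂ) / (1 - z * x) ^ 2) z := by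
  have hne := one_sub_ne hz x
  have h1 : HasDerivAt (fun w : ℂ => w * (x : ℂ)) (x : ℂ) z := by
    simpa using (hasDerivAt_id z).mul_const (x : ℂ)
  have h2 : HasDerivAt (fun w : ℂ => 1 - w * (x : ℂ)) (-(x : ℂ)) z := by
    simpa using (hasDerivAt_const z (1:ℂ)).fun_sub h1
  have := h1.fun_div h2 hne
  refine this.congr_deriv ?_
  field_simp
  ring

lemma psi_hasDerivAt (μ : Measure Circle) [IsProbabilityMeasure μ] {z : ℂ}
    (hz : ‖z‖ < 1) :
    HasDerivAt (psiM μ) (∫ x : Circle, (x : ℂ) / (1 - z * x) ^ 2 ∂μ) z := by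
  set r : ℝ := (1 + ‖z‖) / 2 with hrdef
  have hr1 : r < 1 := by rw [hrdef]; linarith
  have hzr : ‖z‖ < r := by rw [hrdef]; linarith
  set ε : ℝ := r - ‖z‖ with hε
  have hεpos : 0 < ε := by linarith
  have hwlt : ∀ w ∈ ball z ε, ‖w‖ < r := by
    intro w hw
    have : ‖w - z‖ < ε := by simpa [dist_eq] using hw
    calc ‖w‖ ≤ ‖w - z‖ + ‖z‖ := by
          simpa using norm_add_le (w - z) z
      _ < ε + ‖z‖ := by linarith
      _ = r := by rw [hε]; ring
  have hden : ∀ w : ℂ, ‖w‖ < r → ∀ x : Circle, 1 - r ≤ ‖1 - w * x‖ := by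
    intro w hw x
    have h1 : ‖w * x‖ = ‖w‖ := by
      rw [norm_mul, Circle.norm_coe, mul_one]
    calc 1 - r ≤ 1 - ‖w * x‖ := by rw [h1]; linarith
      _ ≤ ‖1 - w * x‖ := by
          have := norm_sub_norm_le (1:ℂ) (w * (x:ℂ))
          simpa using this
  have hmeas : ∀ w : ℂ, AEStronglyMeasurable (fun x : Circle => w * x / (1 - w * x)) μ := by
    intro w
    refine Measurable.aestronglyMeasurable ?_
    exact ((measurable_const.mul circle_coe_cont.measurable)).div
      (measurable_const.sub (measurable_const.mul circle_coe_cont.measurable))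
  have hmeas' : AEStronglyMeasurable (fun x : Circle => (x : ℂ) / (1 - z * x) ^ 2) μ := by
    refine Measurable.aestronglyMeasurable ?_
    exact circle_coe_cont.measurable.div
      ((measurable_const.sub (measurable_const.mul circle_coe_cont.measurable)).pow_const 2)
  have hint : Integrable (fun x : Circle => z * x / (1 - z * x)) μ := by
    refine integ_cont μ _ ?_
    exact (continuous_const.mul circle_coe_cont).div
      (continuous_const.sub (continuous_const.mul circle_coe_cont))
      (fun x => one_sub_ne hz x)
  have h1r : (0:ℝ) < 1 - r := by linarith
  have hbound : ∀ᵐ (x : Circle) ∂μ, ∀ w ∈ ball z ε,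
      ‖(x : ℂ) / (1 - w * x) ^ 2‖ ≤ (1 - r)⁻¹ ^ 2 := by
    refine Filter.Eventually.of_forall fun x w hw => ?_
    have hd := hden w (hwlt w hw) x
    have habs : ‖(x : ℂ) / (1 - w * x) ^ 2‖ = (‖1 - w * x‖)⁻¹ ^ 2 := by
      rw [norm_div, norm_pow]
      simp [inv_pow, Circle.norm_coe]
    rw [habs]
    gcongr
  have hdiff : ∀ᵐ (x : Circle) ∂μ, ∀ w ∈ ball z ε,
      HasDerivAt (fun n => n * (x:ℂ) / (1 - n * x)) ((x : ℂ) / (1 - w * x) ^ 2) w := by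
    refine Filter.Eventually.of_forall fun x w hw => ?_
    exact integrand_hasDerivAt (lt_trans (hwlt w hw) hr1) x
  have := (hasDerivAt_integral_of_dominated_loc_of_deriv_le (F' := fun w (x : Circle) => (x:ℂ)/(1-w*(x:ℂ))^2) (ball_mem_nhds z hεpos)
    (Filter.Eventually.of_forall hmeas) hint hmeas' hbound (integrable_const _) hdiff).2
  exact this

lemma re_term {w : ℂ} (hw : ‖w‖ < 1) :
    -(1/2) + (1 - ‖w‖)/(2*(1 + ‖w‖)) ≤ (w / (1 - w)).re := by
  set a : ℝ := ‖w‖ with ha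
  have ha0 : 0 ≤ a := norm_nonneg w
  have hne : (1:ℂ) - w ≠ 0 := by
    intro h
    have h1 : w = 1 := by linear_combination -h
    have : a = 1 := by rw [ha, h1]; simp
    linarith
  have hns : 0 < Complex.normSq (1 - w) := Complex.normSq_pos.2 hne
  have hsq : Complex.normSq w = a ^ 2 := by rw [ha, Complex.sq_norm]
  have hre : |w.re| ≤ a := Complex.abs_re_le_norm w
  have hD : Complex.normSq (1 - w) = 1 - 2 * w.re + a ^ 2 := by
    rw [← hsq]
    simp [Complex.normSq_apply, Complex.sub_re, Complex.sub_im]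
    ring
  have hDle : Complex.normSq (1 - w) ≤ (1 + a) ^ 2 := by
    rw [hD]
    have : -a ≤ w.re := neg_le_of_abs_le hre
    nlinarith
  have key : (w / (1 - w)).re = (w.re - a ^ 2) / Complex.normSq (1 - w) := by
    rw [Complex.div_re, ← hsq]
    field_simp [Complex.normSq_apply, Complex.sub_re, Complex.sub_im]
    simp only [Complex.normSq_apply, Complex.sub_re, Complex.sub_im, Complex.one_re, Complex.one_im]; ring
  rw [key]
  have hhalf : (w.re - a ^ 2) / Complex.normSq (1 - w) + 1/2
      = (1 - a ^ 2) / (2 * Complex.normSq (1 - w)) := by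
    field_simp
    rw [hD]; ring
  have h1a : (0:ℝ) < 1 + a := by linarith
  have hfrac : (1 - a)/(2*(1 + a)) ≤ (1 - a ^ 2) / (2 * Complex.normSq (1 - w)) := by
    have h1 : (1 - a ^ 2) = (1 - a) * (1 + a) := by ring
    have h2 : (1 - a)/(2*(1+a)) = (1 - a) * (1 + a) / (2 * (1 + a)^2) := by
      field_simp
    rw [h1, h2]
    refine div_le_div_of_nonneg_left ?_ ?_ ?_
    · exact mul_nonneg (by linarith) (by linarith)
    · linarith
    · nlinarith
  linarith

lemma re_psi (μ : Measure Circle) [IsProbabilityMeasure μ] {z : ℂ}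
    (hz : ‖z‖ < 1) :
    -(1/2) + (1 - ‖z‖)/(2*(1 + ‖z‖)) ≤ (psiM μ z).re := by
  have hint : Integrable (fun x : Circle => z * x / (1 - z * x)) μ := by
    refine integ_cont μ _ ?_
    exact (continuous_const.mul circle_coe_cont).div
      (continuous_const.sub (continuous_const.mul circle_coe_cont))
      (fun x => one_sub_ne hz x)
  have hre : (psiM μ z).re = ∫ x : Circle, (z * x / (1 - z * x)).re ∂μ := by
    rw [psiM]
    have := integral_re (𝕜 := ℂ) hint
    simpa [RCLike.re_to_complex] using this.symm
  rw [hre]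
  have hpt : ∀ x : Circle,
      -(1/2) + (1 - ‖z‖)/(2*(1 + ‖z‖)) ≤ (z * x / (1 - z * x)).re := by
    intro x
    have habs : ‖z * x‖ = ‖z‖ := by
      rw [norm_mul, Circle.norm_coe, mul_one]
    have := re_term (w := z * x) (by rw [habs]; exact hz)
    rwa [habs] at this
  calc -(1/2) + (1 - ‖z‖)/(2*(1 + ‖z‖))
      = ∫ _x : Circle, (-(1/2) + (1 - ‖z‖)/(2*(1 + ‖z‖))) ∂μ := by
        simp
    _ ≤ ∫ x : Circle, (z * x / (1 - z * x)).re ∂μ := by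
        refine integral_mono (integrable_const _) hint.re fun x => hpt x

lemma psiM_zero (μ : Measure Circle) : psiM μ 0 = 0 := by simp [psiM]

lemma Km_zero (μ : Measure Circle) : Km μ 0 = 0 := by simp [Km, psiM_zero]

lemma re_psi_pos (μ : Measure Circle) [IsProbabilityMeasure μ] {z : ℂ}
    (hz : ‖z‖ < 1) : -(1/2) < (psiM μ z).re := by
  have h := re_psi μ hz
  have ha0 : 0 ≤ ‖z‖ := norm_nonneg z
  have : 0 < (1 - ‖z‖)/(2*(1 + ‖z‖)) :=
    div_pos (by linarith) (by linarith)
  linarith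

lemma abs_psi_lt (μ : Measure Circle) [IsProbabilityMeasure μ] {z : ℂ}
    (hz : ‖z‖ < 1) :
    ‖psiM μ z‖ < ‖1 + psiM μ z‖ := by
  have h := re_psi_pos μ hz
  have h2 : ‖psiM μ z‖ ^ 2 < ‖1 + psiM μ z‖ ^ 2 := by
    rw [Complex.sq_norm, Complex.sq_norm]
    simp only [Complex.normSq_apply, Complex.add_re, Complex.add_im, Complex.one_re,
      Complex.one_im]
    nlinarith [Complex.normSq_nonneg (psiM μ z)]
  exact lt_of_pow_lt_pow_left₀ 2 (norm_nonneg _) h2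

lemma one_add_psi_ne (μ : Measure Circle) [IsProbabilityMeasure μ] {z : ℂ}
    (hz : ‖z‖ < 1) : 1 + psiM μ z ≠ 0 := by
  intro h
  have := abs_psi_lt μ hz
  rw [h] at this
  simp at this
  have h0 : (0:ℝ) ≤ ‖psiM μ z‖ := norm_nonneg _
  linarith

lemma abs_Km_lt (μ : Measure Circle) [IsProbabilityMeasure μ] {z : ℂ}
    (hz : ‖z‖ < 1) : ‖Km μ z‖ < 1 := by
  have h := abs_psi_lt μ hz
  have hpos : 0 < ‖1 + psiM μ z‖ :=
    lt_of_le_of_lt (norm_nonneg _) h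
  rw [Km, norm_div]
  exact (div_lt_one hpos).2 h

lemma Km_diffOn (μ : Measure Circle) [IsProbabilityMeasure μ] :
    DifferentiableOn ℂ (Km μ) (ball 0 1) := by
  intro z hz
  rw [mem_ball_zero_iff] at hz
  have hψ : DifferentiableAt ℂ (psiM μ) z := (psi_hasDerivAt μ hz).differentiableAt
  have : DifferentiableAt ℂ (Km μ) z := by
    unfold Km
    exact hψ.div ((differentiableAt_const (1:ℂ)).add hψ) (one_add_psi_ne μ hz)
  exact this.differentiableWithinAt

lemma Km_mapsTo (μ : Measure Circle) [IsProbabilityMeasure μ] :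
    MapsTo (Km μ) (ball 0 1) (ball 0 1) := by
  intro z hz
  rw [mem_ball_zero_iff] at *
  exact abs_Km_lt μ hz

lemma Km_schwarz (μ : Measure Circle) [IsProbabilityMeasure μ] {z : ℂ}
    (hz : ‖z‖ < 1) : ‖Km μ z‖ ≤ ‖z‖ :=
  Complex.norm_le_norm_of_mapsTo_ball_self (Km_diffOn μ) ((Km_mapsTo μ).mono_right ball_subset_closedBall) (Km_zero μ) hz

lemma Km_hasDerivAt_zero (μ : Measure Circle) [IsProbabilityMeasure μ] :
    HasDerivAt (Km μ) (∫ x : Circle, (x : ℂ) ∂μ) 0 := by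
  have hψ : HasDerivAt (psiM μ) (∫ x : Circle, (x : ℂ) ∂μ) 0 := by
    have := psi_hasDerivAt μ (z := 0) (by simp)
    simpa using this
  have hden : HasDerivAt (fun z => 1 + psiM μ z) (∫ x : Circle, (x : ℂ) ∂μ) 0 := by
    simpa using (hasDerivAt_const 0 (1:ℂ)).fun_add hψ
  have hne : 1 + psiM μ 0 ≠ 0 := one_add_psi_ne μ (by simp)
  have := hψ.fun_div hden hne
  have heq : Km μ = fun z => psiM μ z / (1 + psiM μ z) := rfl
  rw [heq]
  refine this.congr_deriv ?_
  rw [psiM_zero]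
  simp

noncomputable def Cc (θ : ℝ) : ℂ :=
  deriv (circleMap 0 (1/2)) θ * ((circleMap 0 (1/2) θ)⁻¹ * (circleMap 0 (1/2) θ)⁻¹)

lemma circleMap_mem (θ : ℝ) : circleMap 0 (1/2) θ ∈ ball (0:ℂ) 1 := by
  rw [mem_ball_zero_iff, norm_circleMap_zero]
  rw [abs_of_pos (by norm_num : (0:ℝ) < 1/2)]
  norm_num

lemma abs_Cc (θ : ℝ) : ‖Cc θ‖ = 2 := by
  simp only [Cc, deriv_circleMap, norm_mul, norm_inv, Complex.norm_I, norm_circleMap_zero,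
    abs_div, abs_one, abs_two]
  norm_num

lemma circleIntegral_eq (f : ℂ → ℂ) :
    (∮ z in C(0, 1/2), (1 / (z - 0)) ^ 1 • (z - 0)⁻¹ • f z)
      = ∫ θ in (0:ℝ)..2 * Real.pi, Cc θ * f (circleMap 0 (1/2) θ) := by
  simp only [circleIntegral, smul_eq_mul, sub_zero, pow_one, one_div, Cc]
  refine intervalIntegral.integral_congr fun θ _ => ?_
  ring

lemma cauchy_formula {f : ℂ → ℂ} (hd : DifferentiableOn ℂ f (ball 0 1)) {w : ℂ}
    (hw : HasDerivAt f w 0) :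
    w = (2 * ↑Real.pi * Complex.I)⁻¹
        * ∫ θ in (0:ℝ)..2 * Real.pi, Cc θ * f (circleMap 0 (1/2) θ) := by
  have hsub : closedBall (0:ℂ) ((1/2 : ℝ≥0) : ℝ) ⊆ ball (0:ℂ) 1 := by
    intro z hz
    rw [mem_closedBall_zero_iff] at hz
    rw [mem_ball_zero_iff]
    calc ‖z‖ ≤ ((1/2 : ℝ≥0) : ℝ) := hz
      _ < 1 := by norm_num
  have hps := (hd.mono hsub).hasFPowerSeriesOnBall (R := (1/2 : ℝ≥0)) (by norm_num)
  have hw' := hps.hasFPowerSeriesAt.hasDerivAt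
  have huniq : w = cauchyPowerSeries f 0 ((1/2 : ℝ≥0) : ℝ) 1 fun _ => 1 := hw.unique hw'
  rw [huniq, cauchyPowerSeries_apply]
  push_cast
  rw [circleIntegral_eq f]
  simp [smul_eq_mul]

lemma contE {g : ℂ → ℂ} (hg : ContinuousOn g (ball 0 1)) :
    Continuous fun θ : ℝ => Cc θ * g (circleMap 0 (1/2) θ) := by
  have hCc : Continuous Cc := by
    have h1 : Continuous fun θ => circleMap 0 (1/2) θ := continuous_circleMap 0 (1/2)
    have h2 : Continuous fun θ => (circleMap 0 (1/2) θ)⁻¹ :=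
      h1.inv₀ fun θ => by simpa using circleMap_ne_center (c := (0:ℂ)) (by norm_num : (1/2:ℝ) ≠ 0) (θ := θ)
    have : Cc = fun θ => (circleMap 0 (1/2) θ * Complex.I) *
        ((circleMap 0 (1/2) θ)⁻¹ * (circleMap 0 (1/2) θ)⁻¹) := by
      funext θ; rw [Cc, deriv_circleMap]
    rw [this]
    exact (h1.mul continuous_const).mul (h2.mul h2)
  exact hCc.mul (hg.comp_continuous (continuous_circleMap 0 (1/2)) circleMap_mem)

lemma abs_circle_half (θ : ℝ) : ‖circleMap 0 (1/2) θ‖ = 1/2 := by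
  rw [norm_circleMap_zero]
  exact abs_of_pos (by norm_num)


/-- For a continuous monotone convolution semigroup `(μ_t)` on the unit circle with
generator `u` (so `d/dt K_t(z) = -K_t(z) u(K_t(z))` for the K-transforms
`K_t = K_{μ_t}`), one has `K_t'(0) = e^{-t u(0)}`, and this is the first moment of
`μ_t`: `∫_{S¹} x dμ_t(x) = e^{-t u(0)}`. -/
theorem Ksemigroup_first_moment
    (μ : ℝ → Measure Circle)
    (hprob : ∀ t ≥ (0 : ℝ), IsProbabilityMeasure (μ t))
    (h0 : μ 0 = Measure.dirac 1)
    (hsg : ∀ s ≥ (0 : ℝ), ∀ t ≥ (0 : ℝ), ∀ z ∈ ball (0 : ℂ) 1,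
      Km (μ (s + t)) z = Km (μ s) (Km (μ t) z))
    (hcont : ∀ f : C(Circle, ℝ), ContinuousOn (fun t => ∫ x, f x ∂(μ t)) (Ici 0))
    (u : ℂ → ℂ)
    (hu : DifferentiableOn ℂ u (ball (0 : ℂ) 1))
    (hure : ∀ z ∈ ball (0 : ℂ) 1, 0 ≤ (u z).re)
    (hode : ∀ z ∈ ball (0 : ℂ) 1, ∀ t ≥ (0 : ℝ),
      HasDerivWithinAt (fun s => Km (μ s) z) (-(Km (μ t) z) * u (Km (μ t) z)) (Ici 0) t) :
    ∀ t ≥ (0 : ℝ),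
      HasDerivAt (Km (μ t)) (Complex.exp (-(t : ℂ) * u 0)) 0 ∧
      ∫ x : Circle, (x : ℂ) ∂(μ t) = Complex.exp (-(t : ℂ) * u 0) := by
  set m : ℝ → ℂ := fun t => ∫ x : Circle, (x : ℂ) ∂(μ t) with hmdef
  have hKd : ∀ t ≥ (0:ℝ), HasDerivAt (Km (μ t)) (m t) 0 := by
    intro t ht
    haveI := hprob t ht
    exact Km_hasDerivAt_zero (μ t)
  have hm0 : m 0 = 1 := by
    rw [hmdef]
    simp only
    rw [h0, integral_dirac' _ 1 circle_coe_cont.stronglyMeasurable]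
    simp
  -- continuity of m on Ici 0
  have hmc : ContinuousOn m (Ici 0) := by
    have hfr : Continuous fun x : Circle => (x:ℂ).re := Complex.continuous_re.comp circle_coe_cont
    have hfi : Continuous fun x : Circle => (x:ℂ).im := Complex.continuous_im.comp circle_coe_cont
    have h1 := hcont ⟨_, hfr⟩
    have h2 := hcont ⟨_, hfi⟩
    simp only [ContinuousMap.coe_mk] at h1 h2
    have heq : ∀ t ∈ Ici (0:ℝ),
        ((∫ x : Circle, (x:ℂ).re ∂(μ t) : ℝ) : ℂ)
          + ((∫ x : Circle, (x:ℂ).im ∂(μ t) : ℝ) : ℂ) * Complex.I = m t := by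
      intro t ht
      haveI := hprob t ht
      have hint := integ_cont (μ t) _ circle_coe_cont
      simpa using integral_re_add_im (𝕜 := ℂ) hint
    refine ContinuousOn.congr ?_ (fun t ht => (heq t ht).symm)
    exact (Complex.continuous_ofReal.comp_continuousOn h1).add
      ((Complex.continuous_ofReal.comp_continuousOn h2).mul continuousOn_const)
  -- bound for u on closedBall 0 (1/2)
  obtain ⟨M, hM⟩ : ∃ M, ∀ z ∈ closedBall (0:ℂ) (1/2), ‖u z‖ ≤ M := by
    refine (isCompact_closedBall (0:ℂ) (1/2)).exists_bound_of_continuousOn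
      (hu.continuousOn.mono fun z hz => ?_)
    rw [mem_closedBall_zero_iff] at hz
    rw [mem_ball_zero_iff]
    linarith [hz]
  -- derivative of m at interior points
  have h2πI : (2 * (Real.pi:ℂ) * Complex.I) ≠ 0 :=
    mul_ne_zero (mul_ne_zero two_ne_zero (Complex.ofReal_ne_zero.2 Real.pi_ne_zero))
      Complex.I_ne_zero
  have hmd : ∀ t₀ > (0:ℝ), HasDerivAt m (-(m t₀ * u 0)) t₀ := by
    intro t₀ ht₀
    haveI : IsProbabilityMeasure (μ t₀) := hprob t₀ ht₀.le
    have hball : ∀ t ∈ ball t₀ t₀, (0:ℝ) < t := by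
      intro t htb
      rw [mem_ball, Real.dist_eq] at htb
      have := abs_lt.1 htb
      linarith [this.1]
    set F : ℝ → ℝ → ℂ := fun t θ => Cc θ * Km (μ t) (circleMap 0 (1/2) θ) with hF
    set F' : ℝ → ℝ → ℂ := fun t θ =>
      Cc θ * (-(Km (μ t) (circleMap 0 (1/2) θ)) * u (Km (μ t) (circleMap 0 (1/2) θ))) with hF'
    have hrep : ∀ t ≥ (0:ℝ), (∫ θ in (0:ℝ)..2*Real.pi, F t θ)
        = (2 * (Real.pi:ℂ) * Complex.I) * m t := by
      intro t ht
      haveI := hprob t ht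
      have hc := cauchy_formula (Km_diffOn (μ t)) (hKd t ht)
      rw [hF]
      rw [show m t = (2 * (Real.pi:ℂ) * Complex.I)⁻¹
        * ∫ θ in (0:ℝ)..2*Real.pi, Cc θ * Km (μ t) (circleMap 0 (1/2) θ) from hc]
      field_simp
    have hcontF : ∀ t > (0:ℝ), Continuous (F t) := by
      intro t ht
      haveI := hprob t ht.le
      exact contE (Km_diffOn (μ t)).continuousOn
    have hcontF' : Continuous (F' t₀) := by
      have hg : ContinuousOn (fun z => -(Km (μ t₀) z) * u (Km (μ t₀) z)) (ball 0 1) :=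
        ((Km_diffOn (μ t₀)).continuousOn.neg).mul
          (hu.continuousOn.comp (Km_diffOn (μ t₀)).continuousOn (Km_mapsTo (μ t₀)))
      exact contE (g := fun z => -(Km (μ t₀) z) * u (Km (μ t₀) z)) hg
    have habs' : ∀ t > (0:ℝ), ∀ θ : ℝ, ‖F' t θ‖ ≤ M := by
      intro t ht θ
      haveI := hprob t ht.le
      have hz1 : ‖circleMap 0 (1/2) θ‖ < 1 := by
        rw [abs_circle_half]; norm_num
      have hK : ‖Km (μ t) (circleMap 0 (1/2) θ)‖ ≤ 1/2 := by
        have := Km_schwarz (μ t) hz1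
        rwa [abs_circle_half] at this
      have hu' : ‖u (Km (μ t) (circleMap 0 (1/2) θ))‖ ≤ M :=
        hM _ (by rw [mem_closedBall_zero_iff]; exact hK)
      have hM0 : 0 ≤ M := le_trans (norm_nonneg _) hu'
      have hnorm : ‖F' t θ‖ = 2 * (‖Km (μ t) (circleMap 0 (1/2) θ)‖
          * ‖u (Km (μ t) (circleMap 0 (1/2) θ))‖) := by
        rw [hF']
        simp only [norm_mul, norm_neg, abs_Cc]
      rw [hnorm]
      calc 2 * (‖Km (μ t) (circleMap 0 (1/2) θ)‖
            * ‖u (Km (μ t) (circleMap 0 (1/2) θ))‖)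
          ≤ 2 * ((1/2) * M) := by
            gcongr
        _ = M := by ring
    have key := (intervalIntegral.hasDerivAt_integral_of_dominated_loc_of_deriv_le
      (F := F) (F' := F') (x₀ := t₀) (s := ball t₀ t₀) (a := 0) (b := 2*Real.pi) (μ := MeasureTheory.volume)
      (bound := fun _ => M) (ball_mem_nhds t₀ ht₀)
      (Filter.eventually_of_mem (ball_mem_nhds t₀ ht₀)
        (fun t htb => ((hcontF t (hball t htb)).aestronglyMeasurable)))
      ((hcontF t₀ ht₀).intervalIntegrable 0 (2*Real.pi))
      hcontF'.aestronglyMeasurable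
      (Filter.Eventually.of_forall fun θ _ t htb => habs' t (hball t htb) θ)
      (intervalIntegrable_const)
      (Filter.Eventually.of_forall fun θ _ t htb => by
        have ht := hball t htb
        have h := (hode _ (circleMap_mem θ) t ht.le).hasDerivAt (Ici_mem_nhds ht)
        exact h.const_mul (Cc θ))).2
    -- identify the function with (2πI) * m near t₀
    have key' : HasDerivAt (fun t => (2 * (Real.pi:ℂ) * Complex.I) * m t)
        (∫ θ in (0:ℝ)..2*Real.pi, F' t₀ θ) t₀ := by
      refine key.congr_of_eventuallyEq ?_
      refine Filter.eventuallyEq_of_mem (ball_mem_nhds t₀ ht₀) fun t htb => ?_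
      exact (hrep t (hball t htb).le).symm
    -- identify the derivative value
    have hG0 : HasDerivAt (fun z => -(Km (μ t₀) z) * u (Km (μ t₀) z)) (-(m t₀ * u 0)) 0 := by
      have hK := hKd t₀ ht₀.le
      have hu0 : DifferentiableAt ℂ u 0 :=
        hu.differentiableAt (isOpen_ball.mem_nhds (by simp))
      have hu0' : HasDerivAt u (deriv u 0) (Km (μ t₀) 0) := by
        rw [Km_zero]; exact hu0.hasDerivAt
      have hcomp := hu0'.comp 0 hK
      have := hK.neg.mul hcomp
      refine this.congr_deriv ?_
      simp only [Function.comp_apply, Pi.neg_apply, Km_zero, neg_zero, zero_mul, add_zero]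
      ring
    have hGd : DifferentiableOn ℂ (fun z => -(Km (μ t₀) z) * u (Km (μ t₀) z)) (ball 0 1) := by
      refine ((Km_diffOn (μ t₀)).neg).mul ?_
      exact hu.comp (Km_diffOn (μ t₀)) (Km_mapsTo (μ t₀))
    have hval : (∫ θ in (0:ℝ)..2*Real.pi, F' t₀ θ)
        = (2 * (Real.pi:ℂ) * Complex.I) * (-(m t₀ * u 0)) := by
      have hc := cauchy_formula hGd hG0
      rw [hF']
      rw [show -(m t₀ * u 0) = (2 * (Real.pi:ℂ) * Complex.I)⁻¹ * ∫ θ in (0:ℝ)..2*Real.pi,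
        Cc θ * (-(Km (μ t₀) (circleMap 0 (1/2) θ)) * u (Km (μ t₀) (circleMap 0 (1/2) θ)))
        from hc]
      field_simp
    rw [hval] at key'
    have h3 := key'.const_mul ((2 * (Real.pi:ℂ) * Complex.I)⁻¹)
    simp only [inv_mul_cancel_left₀ h2πI] at h3
    exact h3
  -- identification with the exponential
  set h : ℝ → ℂ := fun t => Complex.exp ((t:ℂ) * u 0) * m t with hhdef
  have hhc : ContinuousOn h (Ici 0) := by
    refine ContinuousOn.mul ?_ hmc
    exact (Continuous.cexp (Complex.continuous_ofReal.mul continuous_const)).continuousOn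
  have hh0 : h 0 = 1 := by
    rw [hhdef]; simp [hm0]
  have hhconst : ∀ T > (0:ℝ), h T = 1 := by
    intro T hT
    have hstep : ∀ ε ∈ Ioc (0:ℝ) T, h T = h ε := by
      intro ε hε
      have hder : ∀ x ∈ Ico ε T, HasDerivWithinAt h 0 (Ici x) x := by
        intro x hx
        have hx0 : 0 < x := lt_of_lt_of_le hε.1 hx.1
        have e1 : HasDerivAt (fun w : ℂ => Complex.exp (w * u 0))
            (Complex.exp ((x:ℂ) * u 0) * u 0) (x:ℂ) := by
          simpa using ((hasDerivAt_id (x:ℂ)).mul_const (u 0)).cexp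
        have h1 : HasDerivAt (fun t : ℝ => Complex.exp ((t:ℂ) * u 0))
            (Complex.exp ((x:ℂ) * u 0) * u 0) x := e1.comp_ofReal
        have h2 := hmd x hx0
        have h3 := h1.fun_mul h2
        have h4 : HasDerivAt h 0 x := by
          refine h3.congr_deriv ?_
          ring
        exact h4.hasDerivWithinAt
      have := constant_of_has_deriv_right_zero
        (hhc.mono (Icc_subset_Ici_self.trans (Ici_subset_Ici.2 hε.1.le))) hder T
        (right_mem_Icc.2 hε.2)
      exact this
    -- take the limit ε → 0⁺
    have hlim1 : Filter.Tendsto h (nhdsWithin 0 (Ioi 0)) (nhds (h 0)) :=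
      ((hhc 0 (self_mem_Ici)).mono_left (nhdsWithin_mono 0 Ioi_subset_Ici_self))
    have hlim2 : Filter.Tendsto h (nhdsWithin 0 (Ioi 0)) (nhds (h T)) := by
      have hmem : Ioc (0:ℝ) T ∈ nhdsWithin 0 (Ioi 0) :=
        Ioc_mem_nhdsGT_of_mem ⟨le_refl 0, hT⟩
      refine Filter.Tendsto.congr' ?_ tendsto_const_nhds
      exact Filter.eventuallyEq_of_mem hmem fun ε hε => hstep ε hε
    rw [← hh0]
    exact tendsto_nhds_unique hlim2 hlim1
  have hexp : ∀ t ≥ (0:ℝ), m t = Complex.exp (-(t:ℂ) * u 0) := by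
    intro t ht
    rcases eq_or_lt_of_le ht with h1 | h1
    · rw [← h1, hm0]
      simp
    · have := hhconst t h1
      rw [hhdef] at this
      simp only at this
      have hne : Complex.exp ((t:ℂ) * u 0) ≠ 0 := Complex.exp_ne_zero _
      have : m t = (Complex.exp ((t:ℂ) * u 0))⁻¹ := by
        field_simp at this ⊢
        linear_combination this
      rw [this, ← Complex.exp_neg]
      ring_nf
  intro t ht
  refine ⟨?_, ?_⟩
  · have := hKd t ht
    rwa [hexp t ht] at this
  · exact hexp t ht
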